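/- Let u : [a, b] → ℝ be C² satisfying u'' = c·u for a continuous function c ≥ 4 on [a, b], and suppose u has no zero on [a, b] and (without loss of generality) u > 0 with u'(b) ≤ 0. Then u²(a) ≥ (1/2)·e^{2(x - a)}·u²(x) for all x ∈ [a, b]. -/

import Mathlib

open Real Set

/-- If `u'' = c u` with `c` continuous, `c ≥ 4`, `u > 0` on `[a, b]` and
`u'(b) ≤ 0`, then `u(a)² ≥ (1/2) e^{2(x-a)} u(x)²` on `[a, b]`. -/
theorem stmt6
    (u c : ℝ → ℝ) (a b : ℝ) (hab : a ≤ b)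
    (hdiff : ∀ x ∈ Icc a b, DifferentiableAt ℝ u x)
    (hdiff' : ∀ x ∈ Icc a b, DifferentiableAt ℝ (deriv u) x)
    (hc : ContinuousOn c (Icc a b)) (hc4 : ∀ x ∈ Icc a b, 4 ≤ c x)
    (hODE : ∀ x ∈ Icc a b, deriv (deriv u) x = c x * u x)
    (hpos : ∀ x ∈ Icc a b, 0 < u x)
    (hb : deriv u b ≤ 0) :
    ∀ x ∈ Icc a b, u a ^ 2 ≥ (1 / 2) * Real.exp (2 * (x - a)) * u x ^ 2 := by
  intro x hx
  set W : ℝ → ℝ := fun y =>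
    2 * u y * deriv u y * Real.cosh (2 * (y - b)) -
      u y ^ 2 * (2 * Real.sinh (2 * (y - b))) with hWdef
  have hWderiv : ∀ y ∈ Icc a b, HasDerivAt W
      ((2 * (deriv u y) ^ 2 + (2 * c y - 4) * u y ^ 2) * Real.cosh (2 * (y - b))) y := by
    intro y hy
    have h2 : HasDerivAt (fun z : ℝ => 2 * (z - b)) 2 y := by
      simpa using ((hasDerivAt_id y).sub_const b).const_mul 2
    have hcosh : HasDerivAt (fun z => Real.cosh (2 * (z - b)))
        (Real.sinh (2 * (y - b)) * 2) y := h2.cosh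
    have hsinh : HasDerivAt (fun z => Real.sinh (2 * (z - b)))
        (Real.cosh (2 * (y - b)) * 2) y := h2.sinh
    have hu : HasDerivAt u (deriv u y) y := (hdiff y hy).hasDerivAt
    have hu' : HasDerivAt (deriv u) (c y * u y) y := by
      have := (hdiff' y hy).hasDerivAt
      rwa [hODE y hy] at this
    have h := (((hu.const_mul 2).mul hu').mul hcosh).sub
      ((hu.pow 2).mul (hsinh.const_mul 2))
    refine h.congr_deriv ?_
    push_cast
    simp only [Pi.mul_apply, Pi.pow_apply]
    ring
  have hWcont : ContinuousOn W (Icc a b) :=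
    fun y hy => (hWderiv y hy).continuousAt.continuousWithinAt
  have hWmono : MonotoneOn W (Icc a b) := by
    apply monotoneOn_of_deriv_nonneg (convex_Icc a b) hWcont
    · exact fun y hy =>
        ((hWderiv y (interior_subset hy)).differentiableAt).differentiableWithinAt
    · intro y hy
      rw [(hWderiv y (interior_subset hy)).deriv]
      have h4 := hc4 y (interior_subset hy)
      have hch := (Real.cosh_pos (2 * (y - b))).le
      have h1 : (0:ℝ) ≤ 2 * (deriv u y) ^ 2 + (2 * c y - 4) * u y ^ 2 := by
        nlinarith [sq_nonneg (deriv u y), sq_nonneg (u y)]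
      exact mul_nonneg h1 hch
  have hWb : W b ≤ 0 := by
    have hub := hpos b (right_mem_Icc.mpr hab)
    simp only [hWdef, sub_self, mul_zero, Real.cosh_zero, Real.sinh_zero]
    nlinarith
  have hWnonpos : ∀ y ∈ Icc a b, W y ≤ 0 := fun y hy =>
    le_trans (hWmono hy (right_mem_Icc.mpr hab) hy.2) hWb
  -- the quotient v/φ is antitone
  have hQderiv : ∀ y ∈ Icc a b, HasDerivAt
      (fun z => u z ^ 2 / Real.cosh (2 * (z - b)))
      (W y / (Real.cosh (2 * (y - b))) ^ 2) y := by
    intro y hy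
    have h2 : HasDerivAt (fun z : ℝ => 2 * (z - b)) 2 y := by
      simpa using ((hasDerivAt_id y).sub_const b).const_mul 2
    have hcosh : HasDerivAt (fun z => Real.cosh (2 * (z - b)))
        (Real.sinh (2 * (y - b)) * 2) y := h2.cosh
    have hu : HasDerivAt u (deriv u y) y := (hdiff y hy).hasDerivAt
    have hne : Real.cosh (2 * (y - b)) ≠ 0 := (Real.cosh_pos _).ne'
    have h := (hu.pow 2).div hcosh hne
    refine h.congr_deriv ?_
    rw [hWdef]
    push_cast
    simp only [Pi.mul_apply, Pi.pow_apply]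
    ring
  have hQanti : AntitoneOn (fun z => u z ^ 2 / Real.cosh (2 * (z - b))) (Icc a b) := by
    apply antitoneOn_of_deriv_nonpos (convex_Icc a b)
    · exact fun y hy => (hQderiv y hy).continuousAt.continuousWithinAt
    · exact fun y hy =>
        ((hQderiv y (interior_subset hy)).differentiableAt).differentiableWithinAt
    · intro y hy
      rw [(hQderiv y (interior_subset hy)).deriv]
      exact div_nonpos_of_nonpos_of_nonneg (hWnonpos y (interior_subset hy)) (sq_nonneg _)
  have hQ := hQanti (left_mem_Icc.mpr hab) hx hx.1
  simp only at hQ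
  have hca : (0:ℝ) < Real.cosh (2 * (a - b)) := Real.cosh_pos _
  have hcx : (0:ℝ) < Real.cosh (2 * (x - b)) := Real.cosh_pos _
  have hQ' : u x ^ 2 * Real.cosh (2 * (a - b)) ≤ u a ^ 2 * Real.cosh (2 * (x - b)) :=
    (div_le_div_iff₀ hcx hca).mp hQ
  have key : Real.exp (2 * (x - a)) * Real.cosh (2 * (x - b)) ≤
      2 * Real.cosh (2 * (a - b)) := by
    rw [Real.cosh_eq, Real.cosh_eq]
    have h1 : Real.exp (2 * (x - a)) * Real.exp (2 * (x - b)) ≤ Real.exp (2 * (b - a)) := by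
      rw [← Real.exp_add]
      exact Real.exp_le_exp.mpr (by linarith [hx.2])
    have h2 : Real.exp (2 * (x - a)) * Real.exp (-(2 * (x - b))) = Real.exp (2 * (b - a)) := by
      rw [← Real.exp_add]; ring_nf
    have h3 : Real.exp (-(2 * (a - b))) = Real.exp (2 * (b - a)) := by ring_nf
    have h4 := (Real.exp_pos (2 * (a - b))).le
    nlinarith [Real.exp_pos (2 * (b - a))]
  have hE := (Real.exp_pos (2 * (x - a))).le
  have hux := sq_nonneg (u x)
  have hua := sq_nonneg (u a)
  nlinarith [mul_le_mul_of_nonneg_left hQ' hE,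
    mul_le_mul_of_nonneg_left key hua, sq_nonneg (u x)]
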